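/- Let σ = (P, Z) be a lax pre-stability condition with massless subcategory N. If Q is a slicing of C with d(P, Q) < 1/8, then Q restricts to a slicing of N, i.e. all Q-semistable HN factors of every object of N lie in N. In particular, this applies to the slicing of any lax pre-stability condition in B_ε(σ) for 0 < ε < 1/8. -/

import Mathlib

open CategoryTheory CategoryTheory.Limits CategoryTheory.Pretriangulated
open scoped ENNReal

namespace PaperStab

attribute [local instance] Classical.propDecidable

universe w w₂ u v u₂ v₂

variable (C : Type u) [Category.{v} C] [Preadditive C] [HasZeroObject C]
  [HasShift C ℤ] [∀ n : ℤ, (shiftFunctor C n).Additive] [Pretriangulated C]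

/-- A Harder–Narasimhan filtration of `X` with factors in the slices `P`. -/
structure HNFiltration (P : ℝ → Set C) (X : C) where
  n : ℕ
  obj : Fin (n + 1) → C
  isZero_zero : IsZero (obj 0)
  last_eq : obj (Fin.last n) = X
  map : ∀ i : Fin n, obj i.castSucc ⟶ obj i.succ
  factor : Fin n → C
  phase : Fin n → ℝ
  phase_anti : ∀ i j : Fin n, i < j → phase j < phase i
  factor_nonzero : ∀ i, ¬ IsZero (factor i)
  factor_mem : ∀ i, factor i ∈ P (phase i)
  toFactor : ∀ i : Fin n, obj i.succ ⟶ factor i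
  toShift : ∀ i : Fin n, factor i ⟶ (obj i.castSucc)⟦(1 : ℤ)⟧
  distinguished : ∀ i : Fin n,
    Triangle.mk (map i) (toFactor i) (toShift i) ∈ distTriang C

/-- A slicing of the full (triangulated) subcategory of `C` on the objects `N`.
A slicing of `C` itself is the case `N = Set.univ`. -/
structure Slicing (N : Set C) where
  P : ℝ → Set C
  subset : ∀ φ : ℝ, P φ ⊆ N
  isoClosed : ∀ (φ : ℝ) ⦃X Y : C⦄, (X ≅ Y) → Y ∈ N → X ∈ P φ → Y ∈ P φ
  zero_mem : ∀ (φ : ℝ) ⦃X : C⦄, IsZero X → X ∈ N → X ∈ P φ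
  shift_mem : ∀ (φ : ℝ) (X : C), X ∈ P (φ + 1) ↔ X⟦(-1 : ℤ)⟧ ∈ P φ
  hom_orth : ∀ ⦃φ ψ : ℝ⦄, ψ < φ → ∀ ⦃X Y : C⦄, X ∈ P φ → Y ∈ P ψ → ∀ f : X ⟶ Y, f = 0
  hn : ∀ X ∈ N, ¬ IsZero X → Nonempty (HNFiltration C P X)

/-- Thick subcategory: strictly full triangulated subcategory closed under direct summands. -/
structure IsThick (N : Set C) : Prop where
  isoClosed : ∀ ⦃X Y : C⦄, (X ≅ Y) → X ∈ N → Y ∈ N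
  zero_mem : ∀ ⦃X : C⦄, IsZero X → X ∈ N
  shift_mem : ∀ (X : C) (k : ℤ), X ∈ N → X⟦k⟧ ∈ N
  ext_mem : ∀ T ∈ distTriang C, T.obj₁ ∈ N → T.obj₃ ∈ N → T.obj₂ ∈ N
  summand_mem : ∀ ⦃X Z : C⦄ (i : X ⟶ Z) (r : Z ⟶ X), i ≫ r = 𝟙 X → Z ∈ N → X ∈ N

/-- The set `M` is (the object set of) a strictly full triangulated subcategory. -/
def IsTriangulatedClosed (M : Set C) : Prop :=
  (∀ ⦃X Y : C⦄, (X ≅ Y) → X ∈ M → Y ∈ M) ∧ (∀ ⦃X : C⦄, IsZero X → X ∈ M) ∧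
  (∀ (X : C) (k : ℤ), X ∈ M → X⟦k⟧ ∈ M) ∧
  (∀ T ∈ distTriang C, T.obj₁ ∈ M → T.obj₃ ∈ M → T.obj₂ ∈ M)

/-- Triangulated closure: smallest strictly full triangulated subcategory containing `S0`. -/
def triangClosure (S0 : Set C) : Set C :=
  ⋂₀ {M : Set C | S0 ⊆ M ∧ IsTriangulatedClosed C M}

/-- No infinite chains of proper strict subobjects or proper strict quotients within `H`
(with respect to the strict exact structure induced by the triangles of `C`);
this expresses that `H` is a length (quasi-abelian) category. -/
def NoInfiniteChains (H : Set C) : Prop :=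
  (¬ ∃ (X : ℕ → C) (f : ∀ k : ℕ, X (k + 1) ⟶ X k), ∀ k : ℕ,
      X (k + 1) ∈ H ∧ X k ∈ H ∧ ∃ (Q : C) (g : X k ⟶ Q) (h : Q ⟶ (X (k + 1))⟦(1 : ℤ)⟧),
        Triangle.mk (f k) g h ∈ (distTriang C) ∧ Q ∈ H ∧ ¬ IsZero Q) ∧
  (¬ ∃ (X : ℕ → C) (f : ∀ k : ℕ, X k ⟶ X (k + 1)), ∀ k : ℕ,
      X k ∈ H ∧ X (k + 1) ∈ H ∧ ∃ (A : C) (e : A ⟶ X k) (h : X (k + 1) ⟶ A⟦(1 : ℤ)⟧),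
        Triangle.mk e (f k) h ∈ (distTriang C) ∧ A ∈ H ∧ ¬ IsZero A)

/-- `X` is a simple object of the (quasi-)abelian subcategory on `H`. -/
def IsSimpleIn (H : Set C) (X : C) : Prop :=
  X ∈ H ∧ ¬ IsZero X ∧ ∀ (A Q : C) (f : A ⟶ X) (g : X ⟶ Q) (h : Q ⟶ A⟦(1 : ℤ)⟧),
    Triangle.mk f g h ∈ (distTriang C) → A ∈ H → Q ∈ H → IsZero A ∨ IsZero Q

/-- An algebraic heart: a length category with finitely many simple objects up to isomorphism. -/
def AlgebraicHeart (H : Set C) : Prop :=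
  NoInfiniteChains C H ∧ ∃ S : Set C, S.Finite ∧
    (∀ X ∈ S, IsSimpleIn C H X) ∧ ∀ X : C, IsSimpleIn C H X → ∃ Y ∈ S, Nonempty (X ≅ Y)

/-- A torsion pair `(T, Fr)` on the heart `H`. -/
def TorsionPair (H T Fr : Set C) : Prop :=
  T ⊆ H ∧ Fr ⊆ H ∧ (∀ X ∈ T, ∀ Y ∈ Fr, ∀ f : X ⟶ Y, f = 0) ∧
  ∀ X ∈ H, ∃ (A B : C) (f : A ⟶ X) (g : X ⟶ B) (h : B ⟶ A⟦(1 : ℤ)⟧),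
    Triangle.mk f g h ∈ (distTriang C) ∧ A ∈ T ∧ B ∈ Fr

/-- The class of morphisms with cone in `N`; inverting it gives the Verdier quotient `C/N`. -/
def VerdierW (N : Set C) : MorphismProperty C := fun X Y f =>
  ∃ (Z : C) (g : Y ⟶ Z) (h : Z ⟶ X⟦(1 : ℤ)⟧), Triangle.mk f g h ∈ (distTriang C) ∧ Z ∈ N

variable {C}

noncomputable def Slicing.maxPhase {N : Set C} (S : Slicing C N) (X : C) : ℝ :=
  if h : X ∈ N ∧ ¬ IsZero X then ⨆ i, (S.hn X h.1 h.2).some.phase i else 0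

noncomputable def Slicing.minPhase {N : Set C} (S : Slicing C N) (X : C) : ℝ :=
  if h : X ∈ N ∧ ¬ IsZero X then ⨅ i, (S.hn X h.1 h.2).some.phase i else 0

/-- The metric on slicings, `d(S, T) = sup max (|φ⁺_S - φ⁺_T|) (|φ⁻_S - φ⁻_T|)`,
with values in `[0, ∞]`. -/
noncomputable def slicingDist {N : Set C} (S T : Slicing C N) : ℝ≥0∞ :=
  ⨆ X : C, ENNReal.ofReal
    (max |S.maxPhase X - T.maxPhase X| |S.minPhase X - T.minPhase X|)

/-- `P(I)`: objects whose HN factors have phases in the interval `I`. -/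
def Slicing.interval {N : Set C} (S : Slicing C N) (I : Set ℝ) : Set C :=
  {X | X ∈ N ∧ (IsZero X ∨ ∃ F : HNFiltration C S.P X, ∀ i, F.phase i ∈ I)}

/-- `P(I)` is a length quasi-abelian category. -/
def Slicing.LengthOn {N : Set C} (S : Slicing C N) (I : Set ℝ) : Prop :=
  NoInfiniteChains C (S.interval I)

def Slicing.LocallyFinite {N : Set C} (S : Slicing C N) : Prop :=
  ∃ ε > (0 : ℝ), ∀ φ : ℝ, S.LengthOn (Set.Ioo (φ - ε) (φ + ε))

/-- The slicing `S` restricts to the subcategory `N`: HN factors of objects of `N` lie in `N`. -/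
def Slicing.RestrictsTo {N0 : Set C} (S : Slicing C N0) (N : Set C) : Prop :=
  ∀ X ∈ N, ¬ IsZero X → ∃ F : HNFiltration C S.P X, ∀ i, F.factor i ∈ N

/-- `P(I) ∩ N` is a Serre subcategory of `P(I)`. -/
def Slicing.SerreOn {N0 : Set C} (S : Slicing C N0) (N : Set C) (I : Set ℝ) : Prop :=
  ∀ T ∈ distTriang C, T.obj₁ ∈ S.interval I → T.obj₂ ∈ S.interval I →
    T.obj₃ ∈ S.interval I → (T.obj₂ ∈ N ↔ T.obj₁ ∈ N ∧ T.obj₃ ∈ N)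

/-- The slicing `S` is adapted to the thick subcategory `N`. -/
def Slicing.IsAdapted {N0 : Set C} (S : Slicing C N0) (N : Set C) : Prop :=
  S.RestrictsTo N ∧
    ∀ φ : ℝ, S.SerreOn N (Set.Ioc φ (φ + 1)) ∧ S.SerreOn N (Set.Ico φ (φ + 1))

variable (C)
variable (E : Type w) [NormedAddCommGroup E] [InnerProductSpace ℝ E] [FiniteDimensional ℝ E]

/-- The data of the map `v : K(C) → Λ`, realised on `Λ ⊗ ℝ = E`. -/
structure ChargeData where
  v : C → E
  additive : ∀ T ∈ distTriang C, v T.obj₂ = v T.obj₁ + v T.obj₃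

/-- A lax pre-stability condition on the (full triangulated) subcategory `N ⊆ C`,
with locally finite slicing, and charge a linear map `E → ℂ`. -/
structure LaxPreStab (N : Set C) (vd : ChargeData C E) where
  slicing : Slicing C N
  locallyFinite : slicing.LocallyFinite
  Z : E →L[ℝ] ℂ
  compat : ∀ (φ : ℝ) (X : C), X ∈ slicing.P φ → ∃ m : ℝ, 0 ≤ m ∧
    Z (vd.v X) = (m : ℂ) * Complex.exp (↑(Real.pi * φ) * Complex.I)

variable {C E}

/-- The mass of an object: sum of the masses of its HN factors. -/
noncomputable def LaxPreStab.mass {N : Set C} {vd : ChargeData C E}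
    (σ : LaxPreStab C E N vd) (X : C) : ℝ :=
  if h : X ∈ N ∧ ¬ IsZero X then
    ∑ i, ‖σ.Z (vd.v ((σ.slicing.hn X h.1 h.2).some.factor i))‖
  else 0

/-- The massless subcategory of a lax pre-stability condition. -/
def LaxPreStab.massless {N : Set C} {vd : ChargeData C E}
    (σ : LaxPreStab C E N vd) : Set C :=
  {X | X ∈ N ∧ σ.mass X = 0}


/-- The set of phases of the massive HN factors of an object. -/
noncomputable def LaxPreStab.massivePhases {N : Set C} {vd : ChargeData C E}
    (σ : LaxPreStab C E N vd) (X : C) : Set ℝ :=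
  if h : X ∈ N ∧ ¬ IsZero X then
    {φ | ∃ i, (σ.slicing.hn X h.1 h.2).some.phase i = φ ∧
      σ.Z (vd.v ((σ.slicing.hn X h.1 h.2).some.factor i)) ≠ 0}
  else ∅

/-- A stable object of phase `φ`: a simple object of the slice `P(φ)`. -/
def Slicing.IsStableIn {N : Set C} (S : Slicing C N) (φ : ℝ) (X : C) : Prop :=
  ¬ IsZero X ∧ X ∈ S.P φ ∧
    ∀ (A Q : C) (f : A ⟶ X) (g : X ⟶ Q) (h : Q ⟶ A⟦(1 : ℤ)⟧),
      Triangle.mk f g h ∈ (distTriang C) → A ∈ S.P φ → Q ∈ S.P φ → IsZero A ∨ IsZero Q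

def Slicing.IsStable {N : Set C} (S : Slicing C N) (X : C) : Prop :=
  ∃ φ : ℝ, S.IsStableIn φ X

def LaxPreStab.MassiveStable {N : Set C} {vd : ChargeData C E}
    (σ : LaxPreStab C E N vd) (X : C) : Prop :=
  σ.slicing.IsStable X ∧ σ.Z (vd.v X) ≠ 0

/-- The support property: `|Z(v(s))| ≥ ‖v(s)‖ / K` for all massive stable `s`. -/
def LaxPreStab.HasSupport {N : Set C} {vd : ChargeData C E}
    (σ : LaxPreStab C E N vd) : Prop :=
  ∃ K > (0 : ℝ), ∀ X : C, σ.MassiveStable X → ‖vd.v X‖ / K ≤ ‖σ.Z (vd.v X)‖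

/-- A classical (pre-)stability condition: every non-zero object is massive. -/
def LaxPreStab.IsClassical {N : Set C} {vd : ChargeData C E}
    (σ : LaxPreStab C E N vd) : Prop :=
  ∀ X ∈ N, σ.mass X = 0 → IsZero X

/-- The semi-norm `‖W‖_σ` associated to a lax pre-stability condition, valued in `[0,∞]`. -/
noncomputable def LaxPreStab.seminorm {N : Set C} {vd : ChargeData C E}
    (σ : LaxPreStab C E N vd) (W : E →L[ℝ] ℂ) : ℝ≥0∞ :=
  ⨆ (X : C) (_ : σ.MassiveStable X), ENNReal.ofReal (‖W (vd.v X)‖ / ‖σ.Z (vd.v X)‖)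

/-- The (extended pseudo-)metric `max (d(P,Q)) (‖W - Z‖)` on the space of
lax pre-stability conditions; this induces the topology of
`Slice(C) × Hom(Λ, ℂ)`. -/
noncomputable instance {N : Set C} {vd : ChargeData C E} :
    PseudoEMetricSpace (LaxPreStab C E N vd) where
  edist σ τ := max (slicingDist σ.slicing τ.slicing) (ENNReal.ofReal ‖σ.Z - τ.Z‖)
  edist_self σ := by
    have h1 : slicingDist σ.slicing σ.slicing = 0 := by
      unfold slicingDist
      refine le_antisymm (iSup_le fun X => by simp) zero_le
    have h2 : ENNReal.ofReal ‖σ.Z - σ.Z‖ = 0 := by simp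
    simp [h1, h2]
  edist_comm σ τ := by
    show max (slicingDist σ.slicing τ.slicing) (ENNReal.ofReal ‖σ.Z - τ.Z‖) =
      max (slicingDist τ.slicing σ.slicing) (ENNReal.ofReal ‖τ.Z - σ.Z‖)
    have h1 : slicingDist σ.slicing τ.slicing = slicingDist τ.slicing σ.slicing := by
      unfold slicingDist
      refine iSup_congr fun X => ?_
      rw [abs_sub_comm (Slicing.maxPhase σ.slicing X) (Slicing.maxPhase τ.slicing X),
        abs_sub_comm (Slicing.minPhase σ.slicing X) (Slicing.minPhase τ.slicing X)]
    rw [h1, norm_sub_rev]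
  edist_triangle σ τ ρ := by
    show max (slicingDist σ.slicing ρ.slicing) (ENNReal.ofReal ‖σ.Z - ρ.Z‖) ≤
      max (slicingDist σ.slicing τ.slicing) (ENNReal.ofReal ‖σ.Z - τ.Z‖) +
      max (slicingDist τ.slicing ρ.slicing) (ENNReal.ofReal ‖τ.Z - ρ.Z‖)
    apply max_le
    · have h1 : slicingDist σ.slicing ρ.slicing ≤
          slicingDist σ.slicing τ.slicing + slicingDist τ.slicing ρ.slicing := by
        unfold slicingDist
        refine iSup_le fun X => ?_
        have hre : max |Slicing.maxPhase σ.slicing X - Slicing.maxPhase ρ.slicing X|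
              |Slicing.minPhase σ.slicing X - Slicing.minPhase ρ.slicing X| ≤
            (max |Slicing.maxPhase σ.slicing X - Slicing.maxPhase τ.slicing X|
              |Slicing.minPhase σ.slicing X - Slicing.minPhase τ.slicing X|) +
            (max |Slicing.maxPhase τ.slicing X - Slicing.maxPhase ρ.slicing X|
              |Slicing.minPhase τ.slicing X - Slicing.minPhase ρ.slicing X|) := by
          apply max_le
          · exact (abs_sub_le _ _ _).trans (add_le_add (le_max_left _ _) (le_max_left _ _))
          · exact (abs_sub_le _ _ _).trans (add_le_add (le_max_right _ _) (le_max_right _ _))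
        refine le_trans (ENNReal.ofReal_le_ofReal hre) ?_
        refine le_trans ENNReal.ofReal_add_le ?_
        refine add_le_add ?_ ?_
        · exact le_iSup (fun Y : C => ENNReal.ofReal
            (max |Slicing.maxPhase σ.slicing Y - Slicing.maxPhase τ.slicing Y|
              |Slicing.minPhase σ.slicing Y - Slicing.minPhase τ.slicing Y|)) X
        · exact le_iSup (fun Y : C => ENNReal.ofReal
            (max |Slicing.maxPhase τ.slicing Y - Slicing.maxPhase ρ.slicing Y|
              |Slicing.minPhase τ.slicing Y - Slicing.minPhase ρ.slicing Y|)) X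
      exact h1.trans (add_le_add (le_max_left _ _) (le_max_left _ _))
    · have h2 : ENNReal.ofReal ‖σ.Z - ρ.Z‖ ≤
          ENNReal.ofReal ‖σ.Z - τ.Z‖ + ENNReal.ofReal ‖τ.Z - ρ.Z‖ := by
        refine le_trans (ENNReal.ofReal_le_ofReal ?_) ENNReal.ofReal_add_le
        have := dist_triangle σ.Z τ.Z ρ.Z
        simpa [dist_eq_norm] using this
      exact h2.trans (add_le_add (le_max_right _ _) (le_max_right _ _))

/-- The set of classical stability conditions on the subcategory `N` (charge factoring
through `v`), as a subset of the space of lax pre-stability conditions. -/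
def StabSet (N : Set C) (vd : ChargeData C E) : Set (LaxPreStab C E N vd) :=
  {σ | σ.IsClassical ∧ σ.HasSupport}

/-- The space of lax stability conditions: lax pre-stability conditions satisfying the
support property and lying in the closure of the space of classical stability conditions. -/
def StabL (N : Set C) (vd : ChargeData C E) : Set (LaxPreStab C E N vd) :=
  {σ | σ.HasSupport ∧ σ ∈ closure (StabSet N vd)}

/-- Lax stability conditions with massless subcategory exactly `M`. -/
def StabLN (N : Set C) (vd : ChargeData C E) (M : Set C) : Set (LaxPreStab C E N vd) :=
  {σ | σ ∈ StabL N vd ∧ σ.massless = M}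

/-- `τ ∈ B_ε(σ)`. -/
def memB {N : Set C} {vd : ChargeData C E} (σ τ : LaxPreStab C E N vd) (ε : ℝ) : Prop :=
  slicingDist σ.slicing τ.slicing < ENNReal.ofReal ε ∧
  σ.seminorm (τ.Z - σ.Z) < ENNReal.ofReal (Real.sin (Real.pi * ε))

/-- `Λ_N ⊗ ℝ`: the (real span of the) saturation of the image of `K(N)` in `Λ`. -/
def chargeSpan (vd : ChargeData C E) (N : Set C) : Submodule ℝ E :=
  Submodule.span ℝ (vd.v '' N)

/-- `W ↦ W_N`: restriction of a charge to `Λ_N`, viewed in `Hom(Λ, ℂ)` via the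
orthogonal splitting. -/
noncomputable def restrictCharge (K : Submodule ℝ E) (W : E →L[ℝ] ℂ) : E →L[ℝ] ℂ :=
  W.comp (K.subtypeL.comp (Submodule.orthogonalProjectionOnto K))

variable (C) in
/-- The charge data `v_N : K(N) → Λ_N` for a thick subcategory `N`. -/
noncomputable def chargeDataOn (vd : ChargeData C E) (N : Set C) :
    ChargeData C ↥(chargeSpan vd N) where
  v X := Submodule.orthogonalProjectionOnto (chargeSpan vd N) (vd.v X)
  additive T hT := by simp only [vd.additive T hT, map_add]

/-- The image in the quotient of the slices of a slicing:
`P_{C/N}(φ)` is the isomorphism closure of `P(φ)` in `C/N`. -/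
def QuotSlices {D : Type u₂} [Category.{v₂} D] (F : C ⥤ D) (P : ℝ → Set C) (φ : ℝ) :
    Set D :=
  {d | ∃ c ∈ P φ, Nonempty (d ≅ F.obj c)}

/-- Essential image of `N` under the quotient functor, i.e. `N/M ⊆ C/M`. -/
def quotImage {D : Type u₂} [Category.{v₂} D] (F : C ⥤ D) (N : Set C) : Set D :=
  {d | ∃ c ∈ N, Nonempty (d ≅ F.obj c)}

/-- Compatibility of a slicing of `C` with a pair of slicings of `N` and of `C/N`. -/
def Compatible {D : Type u₂} [Category.{v₂} D] [Preadditive D] [HasZeroObject D]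
    [HasShift D ℤ] [∀ n : ℤ, (shiftFunctor D n).Additive] [Pretriangulated D]
    (F : C ⥤ D) {N : Set C}
    (S : Slicing C Set.univ) (SN : Slicing C N) (SQ : Slicing D Set.univ) : Prop :=
  (∀ φ : ℝ, SN.P φ ⊆ S.P φ) ∧ ∀ (φ : ℝ) (X : C), X ∈ S.P φ → F.obj X ∈ SQ.P φ

/-- A slicing is well-adapted to `N` if it is adapted to it and the quotient
slicing on `C/N` is locally finite. -/
def WellAdapted {D : Type u₂} [Category.{v₂} D] [Preadditive D] [HasZeroObject D]
    [HasShift D ℤ] [∀ n : ℤ, (shiftFunctor D n).Additive] [Pretriangulated D]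
    (F : C ⥤ D) (S : Slicing C Set.univ) (N : Set C) : Prop :=
  S.IsAdapted N ∧ ∃ SQ : Slicing D Set.univ,
    (∀ φ : ℝ, SQ.P φ = QuotSlices F S.P φ) ∧ SQ.LocallyFinite

/-- Support propagates from `σ` (with massless subcategory `N`) with constant `ε`. -/
def SupportPropagatesAt (vd : ChargeData C E) (N : Set C)
    (σ : LaxPreStab C E Set.univ vd) (ε : ℝ) : Prop :=
  ∀ τ : LaxPreStab C E Set.univ vd, memB σ τ ε →
    σ.seminorm (σ.Z - (τ.Z - restrictCharge (chargeSpan vd N) τ.Z)) <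
      ENNReal.ofReal (Real.sin (Real.pi * ε)) →
    (∃ τN : LaxPreStab C ↥(chargeSpan vd N) N (chargeDataOn C vd N),
        (∀ φ : ℝ, τN.slicing.P φ = τ.slicing.P φ ∩ N) ∧
        (∀ x : ↥(chargeSpan vd N), τN.Z x = τ.Z ↑x) ∧
        τN ∈ StabL N (chargeDataOn C vd N)) →
    τ ∈ StabL Set.univ vd

/-- Support propagates from `Stab_{l,N}(C)`: uniformly on each connected component. -/
def SupportPropagatesFrom (vd : ChargeData C E) (N : Set C) : Prop :=
  ∀ σ ∈ StabLN Set.univ vd N, ∃ ε > (0 : ℝ),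
    ∀ σ' ∈ connectedComponentIn (StabLN Set.univ vd N) σ, SupportPropagatesAt vd N σ' ε

/-- `f` is a homeomorphism onto its image, which is a union of connected components. -/
def IsHomeoOntoComponents {α : Type*} {β : Type*} [TopologicalSpace α]
    [TopologicalSpace β] (f : α → β) : Prop :=
  Continuous f ∧ Function.Injective f ∧
  (∀ U : Set α, IsOpen U → ∃ V : Set β, IsOpen V ∧ f '' U = V ∩ Set.range f) ∧
  (∀ x ∈ Set.range f, connectedComponent x ⊆ Set.range f)

/-- The equivalence relation on lax stability conditions defining the space of
quotient stability conditions: same charge and same connected component of the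
fibre of the charge map. -/
def qRel (vd : ChargeData C E) :
    ↥(StabL (C := C) Set.univ vd) → ↥(StabL (C := C) Set.univ vd) → Prop :=
  fun σ τ => σ.1.Z = τ.1.Z ∧
    τ ∈ connectedComponentIn {ρ : ↥(StabL (C := C) Set.univ vd) | ρ.1.Z = σ.1.Z} σ

/-- The space of quotient stability conditions, with the quotient topology. -/
def QStab (vd : ChargeData C E) : Type _ := Quot (qRel vd)

noncomputable instance (vd : ChargeData C E) : TopologicalSpace (QStab vd) :=
  inferInstanceAs (TopologicalSpace (Quot _))

/-- The stratum of quotient stability conditions with massless subcategory `N`. -/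
def QStabN (vd : ChargeData C E) (N : Set C) : Set (QStab vd) :=
  {q | ∃ σ : ↥(StabL (C := C) Set.univ vd), σ.1 ∈ StabLN Set.univ vd N ∧ Quot.mk _ σ = q}

/-- The charge map on the space of quotient stability conditions. -/
def qCharge (vd : ChargeData C E) : QStab vd → (E →L[ℝ] ℂ) :=
  Quot.lift (fun σ => σ.1.Z) (fun _ _ h => h.1)


/-! ### Auxiliary lemmas for the proof of statement 7 -/

section Statement7Aux

open ZeroObject

variable {P : ℝ → Set C}

/-- Factor a map through `mor₁` obstruction: if all maps to `T.obj₃⟦-1⟧` vanish and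
`f ≫ T.mor₁ = 0` then `f = 0`. -/
lemma zero_of_comp_mor₁ {T : Triangle C} (hT : T ∈ distTriang C) {s : C}
    (hvan : ∀ g : s ⟶ T.obj₃⟦(-1 : ℤ)⟧, g = 0) (f : s ⟶ T.obj₁) (hf : f ≫ T.mor₁ = 0) :
    f = 0 := by
  obtain ⟨g, hg⟩ := Triangle.coyoneda_exact₂ _ (inv_rot_of_distTriang _ hT) f hf
  rw [hg, show g = 0 from hvan g]; exact zero_comp

lemma zero_of_comp_mor₂ {T : Triangle C} (hT : T ∈ distTriang C) {s : C}
    (hvan : ∀ g : s ⟶ T.obj₁, g = 0) (f : s ⟶ T.obj₂) (hf : f ≫ T.mor₂ = 0) :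
    f = 0 := by
  obtain ⟨g, hg⟩ := Triangle.coyoneda_exact₂ _ hT f hf
  rw [hg, hvan g, zero_comp]

lemma zero_of_mor₁_comp {T : Triangle C} (hT : T ∈ distTriang C) {t : C}
    (hvan : ∀ g : T.obj₃ ⟶ t, g = 0) (f : T.obj₂ ⟶ t) (hf : T.mor₁ ≫ f = 0) :
    f = 0 := by
  obtain ⟨g, hg⟩ := Triangle.yoneda_exact₂ _ hT f hf
  rw [hg, hvan g, comp_zero]

lemma shift_shuttle_up {s t : C} (h : ∀ f : s ⟶ t⟦(-1 : ℤ)⟧, f = 0)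
    (g : s⟦(1 : ℤ)⟧ ⟶ t) : g = 0 := by
  have hf := h ((shiftFunctorCompIsoId C (1 : ℤ) (-1) (by norm_num)).inv.app s ≫
    (shiftFunctor C (-1 : ℤ)).map g)
  have : (shiftFunctor C (-1 : ℤ)).map g = 0 := by
    have := congrArg (fun q => (shiftFunctorCompIsoId C (1 : ℤ) (-1)
      (by norm_num)).hom.app s ≫ q) hf
    simpa using this
  exact (shiftFunctor C (-1 : ℤ)).map_injective (by simpa using this)

lemma shift_shuttle_down {s t : C} (h : ∀ g : s⟦(1 : ℤ)⟧ ⟶ t, g = 0)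
    (f : s ⟶ t⟦(-1 : ℤ)⟧) : f = 0 := by
  have hg := h ((shiftFunctor C (1 : ℤ)).map f ≫
    (shiftFunctorCompIsoId C (-1 : ℤ) 1 (by norm_num)).hom.app t)
  have : (shiftFunctor C (1 : ℤ)).map f = 0 := by
    have := congrArg (fun q => q ≫ (shiftFunctorCompIsoId C (-1 : ℤ) 1
      (by norm_num)).inv.app t) hg
    simpa using this
  exact (shiftFunctor C (1 : ℤ)).map_injective (by simpa using this)

namespace HNFiltration

variable {X : C} (F : HNFiltration C P X)

/-- The `k`-th object of the filtration, with a `ℕ` index. -/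
def objN (k : ℕ) (hk : k ≤ F.n) : C := F.obj ⟨k, Nat.lt_succ_of_le hk⟩

/-- The structure map from level `k` to level `k+1`. -/
def stepMap (k : ℕ) (hk : k < F.n) :
    F.objN k hk.le ⟶ F.objN (k + 1) hk := F.map ⟨k, hk⟩

lemma isZero_objN_zero (hk : 0 ≤ F.n) : IsZero (F.objN 0 hk) := by
  have h0 : (⟨0, Nat.lt_succ_of_le hk⟩ : Fin (F.n + 1)) = 0 := by ext; simp
  rw [objN, h0]
  exact F.isZero_zero

lemma objN_last : F.objN F.n le_rfl = X := F.last_eq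

/-- The triangle at step `k`, expressed with `ℕ`-indices. -/
lemma step_distinguished (k : ℕ) (hk : k < F.n) :
    Triangle.mk (F.stepMap k hk) (F.toFactor ⟨k, hk⟩) (F.toShift ⟨k, hk⟩) ∈ distTriang C :=
  F.distinguished ⟨k, hk⟩

end HNFiltration

end Statement7Aux

set_option linter.unusedSectionVars false

namespace HNFiltration

variable {P : ℝ → Set C} {X : C} (F : HNFiltration C P X)

/-- The composite map from level `k` of the filtration to the top object `X`. -/
noncomputable def towTop : ∀ (k : ℕ) (hk : k ≤ F.n), F.objN k hk ⟶ X
  | k, hk =>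
    if h : k = F.n then eqToHom (by subst h; exact F.objN_last)
    else F.stepMap k (by omega) ≫ towTop (k + 1) (by omega)
  termination_by k => F.n - k

lemma towTop_eq_step (k : ℕ) (hk : k < F.n) :
    F.towTop k hk.le = F.stepMap k hk ≫ F.towTop (k + 1) hk := by
  rw [towTop, dif_neg (by omega)]

lemma towTop_last : F.towTop F.n le_rfl = eqToHom F.objN_last := by
  rw [towTop, dif_pos rfl]

end HNFiltration

section SliceVanish

variable {N : Set C} (S : Slicing C N) {X : C} (F : HNFiltration C S.P X)

/-- Maps out of a filtration level into a semistable object of phase smaller than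
all relevant phases vanish. -/
lemma objN_hom_vanish : ∀ (k : ℕ) (hk : k ≤ F.n) {t : C} {ρ : ℝ}, t ∈ S.P ρ →
    (∀ i : Fin F.n, (i : ℕ) < k → ρ < F.phase i) → ∀ f : F.objN k hk ⟶ t, f = 0
  | 0, hk, t, ρ, ht, hph, f => (F.isZero_objN_zero hk).eq_of_src f 0
  | (k + 1), hk, t, ρ, ht, hph, f => by
    have h1 : F.stepMap k hk ≫ f = 0 :=
      objN_hom_vanish k (by omega) ht (fun i hi => hph i (by omega)) _
    refine zero_of_mor₁_comp (F.step_distinguished k hk) ?_ f h1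
    intro g
    exact S.hom_orth (hph ⟨k, hk⟩ (Nat.lt_succ_self k)) (F.factor_mem ⟨k, hk⟩) ht g

lemma hom_X_vanish {t : C} {ρ : ℝ} (ht : t ∈ S.P ρ)
    (hph : ∀ i : Fin F.n, ρ < F.phase i) (f : X ⟶ t) : f = 0 := by
  have := objN_hom_vanish S F F.n le_rfl ht (fun i _ => hph i)
    (eqToHom F.objN_last ≫ f)
  rw [← cancel_epi (eqToHom F.objN_last)]
  simpa using this

/-- Maps from a suitably negative object into a filtration level vanish. -/
lemma hom_objN_vanish {s : C} {c' : ℝ}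
    (hs : ∀ ⦃t : C⦄ ⦃ρ : ℝ⦄, t ∈ S.P ρ → ρ < c' → ∀ f : s ⟶ t, f = 0) :
    ∀ (k : ℕ) (hk : k ≤ F.n), (∀ i : Fin F.n, (i : ℕ) < k → F.phase i < c') →
      ∀ f : s ⟶ F.objN k hk, f = 0
  | 0, hk, hph, f => (F.isZero_objN_zero hk).eq_of_tgt f 0
  | (k + 1), hk, hph, f => by
    have h1 : f ≫ F.toFactor ⟨k, hk⟩ = 0 :=
      hs (F.factor_mem ⟨k, hk⟩) (hph ⟨k, hk⟩ (Nat.lt_succ_self k)) _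
    refine zero_of_comp_mor₂ (F.step_distinguished k hk) ?_ f h1
    exact hom_objN_vanish hs k (by omega) (fun i hi => hph i (by omega))

lemma memP_shift_neg {t : C} {ρ : ℝ} (ht : t ∈ S.P ρ) :
    t⟦(-1 : ℤ)⟧ ∈ S.P (ρ - 1) := by
  have := (S.shift_mem (ρ - 1) t).mp
  rw [sub_add_cancel] at this
  exact this ht

/-- Shifted version: maps into `(filtration level)⟦-1⟧` vanish. -/
lemma hom_objN_shift_vanish {s : C} {c' : ℝ}
    (hs : ∀ ⦃t : C⦄ ⦃ρ : ℝ⦄, t ∈ S.P ρ → ρ < c' → ∀ f : s ⟶ t, f = 0)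
    (k : ℕ) (hk : k ≤ F.n) (hph : ∀ i : Fin F.n, (i : ℕ) < k → F.phase i < c')
    (f : s ⟶ (F.objN k hk)⟦(-1 : ℤ)⟧) : f = 0 := by
  refine shift_shuttle_down ?_ f
  refine hom_objN_vanish S F ?_ k hk hph
  intro t ρ ht hρ g
  refine shift_shuttle_up ?_ g
  intro f'
  exact hs (memP_shift_neg S ht) (by linarith) f'

lemma hom_X_shift_vanish {s : C} {c' : ℝ}
    (hs : ∀ ⦃t : C⦄ ⦃ρ : ℝ⦄, t ∈ S.P ρ → ρ < c' → ∀ f : s ⟶ t, f = 0)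
    (hph : ∀ i : Fin F.n, F.phase i < c') (f : s ⟶ X⟦(-1 : ℤ)⟧) : f = 0 := by
  have h := hom_objN_shift_vanish S F hs F.n le_rfl (fun i _ => hph i)
    (f ≫ eqToHom (by rw [F.objN_last]))
  rw [← cancel_mono (eqToHom (show X⟦(-1:ℤ)⟧ =
    (F.objN F.n le_rfl)⟦(-1:ℤ)⟧ by rw [F.objN_last]))]
  simpa using h

/-- Descend a map `s ⟶ X` through the filtration when the obstructions vanish. -/
lemma factor_towTop {s : C} {c' : ℝ}
    (hs : ∀ ⦃t : C⦄ ⦃ρ : ℝ⦄, t ∈ S.P ρ → ρ < c' → ∀ f : s ⟶ t, f = 0) :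
    ∀ (k : ℕ) (hk : k ≤ F.n), (∀ i : Fin F.n, k ≤ (i : ℕ) → F.phase i < c') →
      ∀ f : s ⟶ X, ∃ g : s ⟶ F.objN k hk, g ≫ F.towTop k hk = f
  | k, hk, hph, f => by
    by_cases h : k = F.n
    · subst h
      refine ⟨f ≫ eqToHom F.objN_last.symm, ?_⟩
      rw [F.towTop_last]
      simp
    · have hk' : k < F.n := by omega
      obtain ⟨g', hg'⟩ := factor_towTop hs (k + 1) hk'
        (fun i hi => hph i (by omega)) f
      have hobs : g' ≫ F.toFactor ⟨k, hk'⟩ = 0 :=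
        hs (F.factor_mem ⟨k, hk'⟩) (hph ⟨k, hk'⟩ (le_refl k)) _
      obtain ⟨g, hg⟩ : ∃ g : s ⟶ F.objN k hk, g' = g ≫ F.stepMap k hk' :=
          Triangle.coyoneda_exact₂ _ (F.step_distinguished k hk') g' hobs
      have hg2 : g' = g ≫ F.stepMap k hk' := hg
      refine ⟨g, ?_⟩
      rw [F.towTop_eq_step k hk', ← Category.assoc, ← hg2, hg']
  termination_by k => F.n - k

/-- Uniqueness: a map into a filtration level that dies in `X` is zero. -/
lemma cancel_towTop {s : C} {c' : ℝ}
    (hs : ∀ ⦃t : C⦄ ⦃ρ : ℝ⦄, t ∈ S.P ρ → ρ < c' → ∀ f : s ⟶ t, f = 0) :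
    ∀ (k : ℕ) (hk : k ≤ F.n), (∀ i : Fin F.n, k ≤ (i : ℕ) → F.phase i < c') →
      ∀ e : s ⟶ F.objN k hk, e ≫ F.towTop k hk = 0 → e = 0
  | k, hk, hph, e, he => by
    by_cases h : k = F.n
    · subst h
      rw [F.towTop_last] at he
      simpa using he
    · have hk' : k < F.n := by omega
      rw [F.towTop_eq_step k hk', ← Category.assoc] at he
      have h1 : e ≫ F.stepMap k hk' = 0 :=
        cancel_towTop hs (k + 1) hk' (fun i hi => hph i (by omega)) _ he
      refine zero_of_comp_mor₁ (F.step_distinguished k hk') ?_ e h1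
      intro g
      exact hs (memP_shift_neg S (F.factor_mem ⟨k, hk'⟩))
        (by have := hph ⟨k, hk'⟩ (le_refl k); linarith) g
  termination_by k => F.n - k

end SliceVanish

section PhaseUniqueness

variable (S : Slicing C Set.univ) {X : C}

lemma hom_into_X_vanish (F : HNFiltration C S.P X) {s : C} {c' : ℝ}
    (hs : ∀ ⦃t : C⦄ ⦃ρ : ℝ⦄, t ∈ S.P ρ → ρ < c' → ∀ f : s ⟶ t, f = 0)
    (hph : ∀ i : Fin F.n, F.phase i < c') (f : s ⟶ X) : f = 0 := by
  have h := hom_objN_vanish S F hs F.n le_rfl (fun i _ => hph i)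
    (f ≫ eqToHom F.objN_last.symm)
  rw [← cancel_mono (eqToHom F.objN_last.symm)]
  simpa using h

lemma toFactor_ne_zero (F : HNFiltration C S.P X) (k : Fin F.n) :
    F.toFactor k ≠ 0 := by
  intro h
  have hT := F.distinguished k
  have hmono : Mono (Triangle.mk (F.map k) (F.toFactor k) (F.toShift k)).mor₃ :=
    Triangle.mono₃ _ hT h
  have hsplit : IsSplitMono (Triangle.mk (F.map k) (F.toFactor k) (F.toShift k)).mor₃ :=
    isSplitMono_of_mono _
  have hvan : ∀ f : F.obj k.castSucc ⟶ (F.factor k)⟦(-1 : ℤ)⟧, f = 0 := by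
    intro f
    refine objN_hom_vanish S F (k : ℕ) k.2.le
      (memP_shift_neg S (F.factor_mem k)) ?_ f
    intro i hi
    have := F.phase_anti i k (Fin.lt_def.mpr hi)
    linarith
  have hr0 : retraction (Triangle.mk (F.map k) (F.toFactor k) (F.toShift k)).mor₃ = 0 :=
    shift_shuttle_up hvan _
  have hid : 𝟙 ((Triangle.mk (F.map k) (F.toFactor k) (F.toShift k)).obj₃) = 0 := by
    rw [← IsSplitMono.id (Triangle.mk (F.map k) (F.toFactor k) (F.toShift k)).mor₃, hr0,
      comp_zero]
  exact F.factor_nonzero k ((IsZero.iff_id_eq_zero (F.factor k)).mpr hid)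

lemma pos_n (F : HNFiltration C S.P X) (hX : ¬IsZero X) : 1 ≤ F.n := by
  by_contra h
  have hn : F.n = 0 := by omega
  apply hX
  have h0 : (Fin.last F.n) = ⟨0, Nat.lt_succ_of_le (by omega)⟩ := by ext; simp [hn]
  have := F.isZero_objN_zero (by omega)
  rw [HNFiltration.objN, ← h0, F.last_eq] at this
  exact this

lemma obj_succ_eq_X (F : HNFiltration C S.P X) (h1 : 1 ≤ F.n)
    (k : Fin F.n) (hk : (k : ℕ) = F.n - 1) : F.obj k.succ = X := by
  have : k.succ = Fin.last F.n := by ext; simp [hk]; omega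
  rw [this, F.last_eq]

lemma nonzero_of_filt (F : HNFiltration C S.P X) (h1 : 1 ≤ F.n) : ¬IsZero X := by
  intro hz
  set k : Fin F.n := ⟨F.n - 1, by omega⟩ with hkdef
  have he : F.obj k.succ = X := obj_succ_eq_X S F h1 k rfl
  apply toFactor_ne_zero S F k
  have : eqToHom he.symm ≫ F.toFactor k = 0 := hz.eq_of_src _ 0
  calc F.toFactor k = eqToHom he ≫ (eqToHom he.symm ≫ F.toFactor k) := by simp
  _ = 0 := by rw [this, comp_zero]

lemma phase_zero_le (F G : HNFiltration C S.P X) (hF1 : 1 ≤ F.n) (hG1 : 1 ≤ G.n) :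
    G.phase ⟨0, hG1⟩ ≤ F.phase ⟨0, hF1⟩ := by
  by_contra hlt
  push_neg at hlt
  -- the first subobject of `G` is semistable of phase `G.phase 0`
  have hT0 := G.distinguished ⟨0, hG1⟩
  have hz1 : IsZero (Triangle.mk (G.map ⟨0, hG1⟩) (G.toFactor ⟨0, hG1⟩)
      (G.toShift ⟨0, hG1⟩)).obj₁ := G.isZero_objN_zero (Nat.zero_le _)
  have hiso : IsIso (G.toFactor ⟨0, hG1⟩) := (Triangle.isZero₁_iff_isIso₂ _ hT0).1 hz1
  set s : C := G.objN 1 hG1 with hsdef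
  have e : s ≅ G.factor ⟨0, hG1⟩ := @asIso _ _ _ _ (G.toFactor ⟨0, hG1⟩) hiso
  have hsmem : s ∈ S.P (G.phase ⟨0, hG1⟩) :=
    S.isoClosed _ e.symm trivial (G.factor_mem ⟨0, hG1⟩)
  have hsnz : ¬IsZero s := fun h => G.factor_nonzero ⟨0, hG1⟩ (h.of_iso e.symm)
  have hs : ∀ ⦃t : C⦄ ⦃ρ : ℝ⦄, t ∈ S.P ρ → ρ < G.phase ⟨0, hG1⟩ → ∀ f : s ⟶ t, f = 0 :=
    fun t ρ ht hρ f => S.hom_orth hρ hsmem ht f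
  have htow : G.towTop 1 hG1 = 0 := by
    refine hom_into_X_vanish S F hs ?_ _
    intro i
    rcases Nat.eq_zero_or_pos (i : ℕ) with hi | hi
    · have : i = ⟨0, hF1⟩ := by ext; simp [hi]
      rw [this]; exact hlt
    · exact lt_trans (F.phase_anti ⟨0, hF1⟩ i (Fin.lt_def.mpr hi)) hlt
  have hone : (𝟙 s : s ⟶ s) = 0 := by
    refine cancel_towTop S G hs 1 hG1 ?_ _ (by rw [Category.id_comp]; exact htow)
    intro i hi
    exact G.phase_anti ⟨0, hG1⟩ i (Fin.lt_def.mpr (by show 0 < (i : ℕ); omega))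
  exact hsnz ((IsZero.iff_id_eq_zero _).mpr hone)

lemma phase_zero_eq (F G : HNFiltration C S.P X) (hF1 : 1 ≤ F.n) (hG1 : 1 ≤ G.n) :
    F.phase ⟨0, hF1⟩ = G.phase ⟨0, hG1⟩ :=
  le_antisymm (phase_zero_le S G F hG1 hF1) (phase_zero_le S F G hF1 hG1)

lemma phase_last_le (F G : HNFiltration C S.P X) (hF1 : 1 ≤ F.n) (hG1 : 1 ≤ G.n) :
    F.phase ⟨F.n - 1, by omega⟩ ≤ G.phase ⟨G.n - 1, by omega⟩ := by
  by_contra hlt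
  push_neg at hlt
  set k : Fin G.n := ⟨G.n - 1, by omega⟩ with hkdef
  have he : G.obj k.succ = X := obj_succ_eq_X S G hG1 k rfl
  have hvan : ∀ f : X ⟶ G.factor k, f = 0 := by
    refine hom_X_vanish S F (G.factor_mem k) ?_
    intro i
    rcases eq_or_lt_of_le (Nat.le_sub_one_of_lt i.2) with hi | hi
    · have : i = ⟨F.n - 1, by omega⟩ := by ext; simp [hi]
      rw [this]; exact hlt
    · exact lt_trans hlt (F.phase_anti i ⟨F.n - 1, by omega⟩ (Fin.lt_def.mpr hi))
  apply toFactor_ne_zero S G k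
  have h0 : eqToHom he.symm ≫ G.toFactor k = 0 := hvan _
  calc G.toFactor k = eqToHom he ≫ (eqToHom he.symm ≫ G.toFactor k) := by simp
  _ = 0 := by rw [h0, comp_zero]

lemma phase_last_eq (F G : HNFiltration C S.P X) (hF1 : 1 ≤ F.n) (hG1 : 1 ≤ G.n) :
    F.phase ⟨F.n - 1, by omega⟩ = G.phase ⟨G.n - 1, by omega⟩ :=
  le_antisymm (phase_last_le S F G hF1 hG1) (phase_last_le S G F hG1 hF1)

end PhaseUniqueness

section Constructions

open ZeroObject

variable {P : ℝ → Set C} {X : C}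

/-- The one-step filtration of a semistable object. -/
noncomputable def singleFilt {s : C} (ψ : ℝ) (hs : s ∈ P ψ) (hns : ¬IsZero s) :
    HNFiltration C P s where
  n := 1
  obj := ![0, s]
  isZero_zero := by simpa using isZero_zero C
  last_eq := rfl
  map := fun _ => 0
  factor := fun _ => s
  phase := fun _ => ψ
  phase_anti := fun i j h => absurd h (by omega)
  factor_nonzero := fun _ => hns
  factor_mem := fun _ => hs
  toFactor := fun i => eqToHom (by simp)
  toShift := fun _ => 0
  distinguished := fun i => by
    have h0 : i = 0 := Subsingleton.elim i 0
    subst h0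
    refine isomorphic_distinguished _ (contractible_distinguished₁ s) _ ?_
    refine Triangle.isoMk _ _ (eqToIso (by rfl)) (eqToIso (by rfl)) (Iso.refl _)
      ?_ ?_ ?_ <;> simp [Triangle.mk]
    · exact zero_comp
    · rfl
    · exact zero_comp

/-- Truncation of a filtration at level `m`. -/
def truncFilt (F : HNFiltration C P X) (m : ℕ) (hm : m ≤ F.n) :
    HNFiltration C P (F.objN m hm) where
  n := m
  obj := fun j => F.obj ⟨j.1, by omega⟩
  isZero_zero := by
    have h0 : ((⟨(0 : Fin (m+1)).1, by omega⟩ : Fin (F.n + 1))) = 0 := by ext; simp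
    rw [h0]; exact F.isZero_zero
  last_eq := rfl
  map := fun i => F.map ⟨i.1, by omega⟩
  factor := fun i => F.factor ⟨i.1, by omega⟩
  phase := fun i => F.phase ⟨i.1, by omega⟩
  phase_anti := fun i j h => F.phase_anti _ _ (Fin.lt_def.mpr (Fin.lt_def.mp h))
  factor_nonzero := fun i => F.factor_nonzero _
  factor_mem := fun i => F.factor_mem _
  toFactor := fun i => F.toFactor ⟨i.1, by omega⟩
  toShift := fun i => F.toShift ⟨i.1, by omega⟩
  distinguished := fun i => F.distinguished ⟨i.1, by omega⟩

end Constructions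

section PhaseFormulas

variable (S : Slicing C Set.univ) {X : C}

lemma maxPhase_eq_filt (hX : ¬IsZero X) (F : HNFiltration C S.P X) :
    S.maxPhase X = F.phase ⟨0, pos_n S F hX⟩ := by
  have hmem : X ∈ Set.univ ∧ ¬IsZero X := ⟨trivial, hX⟩
  rw [Slicing.maxPhase, dif_pos hmem]
  set G := (S.hn X hmem.1 hmem.2).some with hG
  have hG1 : 1 ≤ G.n := pos_n S G hX
  haveI : Nonempty (Fin G.n) := ⟨⟨0, hG1⟩⟩
  have hsup : ⨆ i, G.phase i = G.phase ⟨0, hG1⟩ := by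
    refine le_antisymm (ciSup_le fun i => ?_) (le_ciSup (Set.Finite.bddAbove
      (Set.finite_range _)) _)
    rcases Nat.eq_zero_or_pos (i : ℕ) with hi | hi
    · have : i = ⟨0, hG1⟩ := by ext; simp [hi]
      rw [this]
    · exact le_of_lt (G.phase_anti ⟨0, hG1⟩ i (Fin.lt_def.mpr (by simpa using hi)))
  rw [hsup]
  exact phase_zero_eq S G F hG1 (pos_n S F hX)

lemma minPhase_eq_filt (hX : ¬IsZero X) (F : HNFiltration C S.P X) :
    S.minPhase X = F.phase ⟨F.n - 1, by have := pos_n S F hX; omega⟩ := by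
  have hmem : X ∈ Set.univ ∧ ¬IsZero X := ⟨trivial, hX⟩
  rw [Slicing.minPhase, dif_pos hmem]
  set G := (S.hn X hmem.1 hmem.2).some with hG
  have hG1 : 1 ≤ G.n := pos_n S G hX
  haveI : Nonempty (Fin G.n) := ⟨⟨0, hG1⟩⟩
  have hinf : ⨅ i, G.phase i = G.phase ⟨G.n - 1, by omega⟩ := by
    refine le_antisymm (ciInf_le (Set.Finite.bddBelow (Set.finite_range _)) _)
      (le_ciInf fun i => ?_)
    rcases eq_or_lt_of_le (Nat.le_sub_one_of_lt i.2) with hi | hi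
    · have : i = ⟨G.n - 1, by omega⟩ := by ext; simp [hi]
      rw [this]
    · exact le_of_lt (G.phase_anti i ⟨G.n - 1, by omega⟩ (Fin.lt_def.mpr hi))
  rw [hinf]
  exact phase_last_eq S G F hG1 (pos_n S F hX)

/-- All phases of any filtration lie between the min and max phase. -/
lemma phase_le_maxPhase (hX : ¬IsZero X) (F : HNFiltration C S.P X) (i : Fin F.n) :
    F.phase i ≤ S.maxPhase X := by
  rw [maxPhase_eq_filt S hX F]
  rcases Nat.eq_zero_or_pos (i : ℕ) with hi | hi
  · have : i = ⟨0, pos_n S F hX⟩ := by ext; simp [hi]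
    rw [this]
  · exact le_of_lt (F.phase_anti ⟨0, pos_n S F hX⟩ i (Fin.lt_def.mpr (by simpa using hi)))

lemma minPhase_le_phase (hX : ¬IsZero X) (F : HNFiltration C S.P X) (i : Fin F.n) :
    S.minPhase X ≤ F.phase i := by
  rw [minPhase_eq_filt S hX F]
  rcases eq_or_lt_of_le (Nat.le_sub_one_of_lt i.2) with hi | hi
  · have : i = ⟨F.n - 1, by have := pos_n S F hX; omega⟩ := by ext; simp [hi]
    rw [this]
  · exact le_of_lt (F.phase_anti i _ (Fin.lt_def.mpr hi))

end PhaseFormulas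

section ChargeLemmas

open ZeroObject

variable (vd : ChargeData C E)

lemma v_zeroObj : vd.v 0 = 0 := by
  have := vd.additive _ (contractible_distinguished (0 : C))
  simpa using this

lemma v_iso {A B : C} (e : A ≅ B) : vd.v A = vd.v B := by
  have hd : Triangle.mk e.hom (0 : B ⟶ 0) 0 ∈ distTriang C := by
    refine isomorphic_distinguished _ (contractible_distinguished A) _ ?_
    exact Triangle.isoMk _ _ (Iso.refl A) e.symm (Iso.refl 0)
      (e.hom_inv_id.trans (Category.comp_id _).symm) (zero_comp.trans comp_zero.symm)
      (zero_comp.trans comp_zero.symm)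
  have := vd.additive _ hd
  simp only [Triangle.mk_obj₁, Triangle.mk_obj₂, Triangle.mk_obj₃] at this
  rw [this, v_zeroObj, add_zero]

lemma v_isZero {A : C} (h : IsZero A) : vd.v A = 0 := by
  rw [v_iso vd h.isoZero, v_zeroObj]

variable {P : ℝ → Set C} {X : C}

lemma v_objN_succ (F : HNFiltration C P X) (k : ℕ) (hk : k < F.n) :
    vd.v (F.objN (k + 1) hk) = vd.v (F.objN k hk.le) + vd.v (F.factor ⟨k, hk⟩) :=
  vd.additive _ (F.step_distinguished k hk)

lemma v_diff (F : HNFiltration C P X) : ∀ (k : ℕ) (hk : k ≤ F.n),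
    vd.v (F.objN F.n le_rfl) = vd.v (F.objN k hk) +
      ∑ i ∈ Finset.univ.filter (fun i : Fin F.n => k ≤ (i : ℕ)), vd.v (F.factor i)
  | k, hk => by
    by_cases h : k = F.n
    · subst h
      have hempty : Finset.univ.filter (fun i : Fin F.n => F.n ≤ (i : ℕ)) = ∅ := by
        refine Finset.filter_eq_empty_iff.mpr ?_
        intro i _
        have := i.2
        omega
      rw [hempty, Finset.sum_empty, add_zero]
    · have hk' : k < F.n := by omega
      rw [v_diff F (k + 1) hk']
      have hins : Finset.univ.filter (fun i : Fin F.n => k ≤ (i : ℕ)) =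
          insert ⟨k, hk'⟩ (Finset.univ.filter (fun i : Fin F.n => k + 1 ≤ (i : ℕ))) := by
        ext i
        simp only [Finset.mem_filter, Finset.mem_insert, Finset.mem_univ, true_and,
          Fin.ext_iff]
        omega
      rw [hins, Finset.sum_insert (by simp), v_objN_succ vd F k hk']
      abel
  termination_by k => F.n - k

lemma v_eq_sum (F : HNFiltration C P X) :
    vd.v X = ∑ i, vd.v (F.factor i) := by
  have h := v_diff vd F 0 (Nat.zero_le _)
  rw [v_isZero vd (F.isZero_objN_zero (Nat.zero_le _)), zero_add] at h
  have hfull : Finset.univ.filter (fun i : Fin F.n => 0 ≤ (i : ℕ)) = Finset.univ := by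
    simp
  rw [hfull] at h
  rw [← congrArg vd.v F.objN_last, h]

end ChargeLemmas

section DistMass

variable {vd : ChargeData C E}

lemma dist_lt {S Q : Slicing C Set.univ}
    (h : slicingDist S Q < ENNReal.ofReal (1 / 8)) (W : C) :
    |S.maxPhase W - Q.maxPhase W| < 1 / 8 ∧ |S.minPhase W - Q.minPhase W| < 1 / 8 := by
  have hle := le_iSup (fun X : C => ENNReal.ofReal
    (max |S.maxPhase X - Q.maxPhase X| |S.minPhase X - Q.minPhase X|)) W
  have hlt := lt_of_le_of_lt hle h
  rw [ENNReal.ofReal_lt_ofReal_iff (by norm_num)] at hlt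
  exact ⟨lt_of_le_of_lt (le_max_left _ _) hlt, lt_of_le_of_lt (le_max_right _ _) hlt⟩

lemma mass_eq_sum (σ : LaxPreStab C E Set.univ vd) {X : C} (hX : ¬IsZero X) :
    σ.mass X = ∑ i, ‖σ.Z (vd.v (((σ.slicing.hn X trivial hX).some).factor i))‖ := by
  rw [LaxPreStab.mass, dif_pos (⟨trivial, hX⟩ : X ∈ Set.univ ∧ ¬IsZero X)]

lemma mass_zero_iff (σ : LaxPreStab C E Set.univ vd) {X : C} (hX : ¬IsZero X) :
    σ.mass X = 0 ↔
      ∀ i, σ.Z (vd.v (((σ.slicing.hn X trivial hX).some).factor i)) = 0 := by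
  rw [mass_eq_sum σ hX]
  rw [Finset.sum_eq_zero_iff_of_nonneg (fun i _ => norm_nonneg _)]
  simp

/-- The phases of any σ-filtration are squeezed near the extremal phases of any
`Q`-filtration, when the slicings are `1/8`-close. -/
lemma window_bounds (S Q : Slicing C Set.univ)
    (hdist : slicingDist S Q < ENNReal.ofReal (1 / 8))
    {W : C} (hW : ¬IsZero W) (Fσ : HNFiltration C S.P W) (FQ : HNFiltration C Q.P W)
    (j : Fin Fσ.n) :
    FQ.phase ⟨FQ.n - 1, by have := pos_n Q FQ hW; omega⟩ - 1/8 < Fσ.phase j ∧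
    Fσ.phase j < FQ.phase ⟨0, pos_n Q FQ hW⟩ + 1/8 := by
  obtain ⟨hmax, hmin⟩ := dist_lt hdist W
  have h1 : Fσ.phase j ≤ S.maxPhase W := phase_le_maxPhase S hW Fσ j
  have h2 : S.minPhase W ≤ Fσ.phase j := minPhase_le_phase S hW Fσ j
  have h3 : Q.maxPhase W = FQ.phase ⟨0, pos_n Q FQ hW⟩ := maxPhase_eq_filt Q hW FQ
  have h4 : Q.minPhase W = FQ.phase ⟨FQ.n - 1, by have := pos_n Q FQ hW; omega⟩ :=
    minPhase_eq_filt Q hW FQ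
  rw [abs_lt] at hmax hmin
  constructor
  · rw [← h4]; linarith [hmin.2]
  · rw [← h3]; linarith [hmax.1]

end DistMass

section Counting

lemma count_prefix {n : ℕ} (φ : Fin n → ℝ) (hanti : ∀ i j : Fin n, i < j → φ j < φ i)
    (c : ℝ) (k : Fin n) :
    ((k : ℕ) < (Finset.univ.filter fun i => c ≤ φ i).card ↔ c ≤ φ k) := by
  constructor
  · intro hk
    by_contra hc
    push_neg at hc
    have hsub : (Finset.univ.filter fun i => c ≤ φ i) ⊆
        Finset.univ.filter (fun i : Fin n => (i : ℕ) < (k : ℕ)) := by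
      intro i hi
      simp only [Finset.mem_filter, Finset.mem_univ, true_and] at hi ⊢
      by_contra hik
      push_neg at hik
      have hle : φ i ≤ φ k := by
        rcases eq_or_lt_of_le hik with h | h
        · rw [show i = k from Fin.ext h.symm]
        · exact le_of_lt (hanti k i (Fin.lt_def.mpr h))
      linarith
    have hcard := Finset.card_le_card hsub
    have hsmall : (Finset.univ.filter (fun i : Fin n => (i : ℕ) < (k : ℕ))).card ≤ (k : ℕ) := by
      have := Finset.card_le_card_of_injOn (fun i : Fin n => (i : ℕ))
        (s := Finset.univ.filter (fun i : Fin n => (i : ℕ) < (k : ℕ)))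
        (t := Finset.range (k : ℕ)) ?_ ?_
      · simpa using this
      · intro i hi
        simp only [Finset.mem_coe, Finset.mem_filter, Finset.mem_univ, true_and] at hi
        simpa using hi
      · intro a _ b _ h
        exact Fin.ext h
    omega
  · intro hc
    have hsub : (Finset.univ.filter (fun i : Fin n => (i : ℕ) ≤ (k : ℕ))) ⊆
        Finset.univ.filter fun i => c ≤ φ i := by
      intro i hi
      simp only [Finset.mem_filter, Finset.mem_univ, true_and] at hi ⊢
      rcases eq_or_lt_of_le hi with h | h
      · rw [show i = k from Fin.ext h]
        exact hc
      · exact le_trans hc (le_of_lt (hanti i k (Fin.lt_def.mpr h)))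
    have hcard := Finset.card_le_card hsub
    have hbig : (k : ℕ) + 1 ≤
        (Finset.univ.filter (fun i : Fin n => (i : ℕ) ≤ (k : ℕ))).card := by
      have hinj := Finset.card_le_card_of_injOn
        (fun j : ℕ => if h : j < n then (⟨j, h⟩ : Fin n) else k)
        (s := Finset.range ((k : ℕ) + 1))
        (t := Finset.univ.filter (fun i : Fin n => (i : ℕ) ≤ (k : ℕ))) ?_ ?_
      · simpa using hinj
      · intro a ha
        simp only [Finset.mem_coe, Finset.mem_range] at ha
        have han : a < n := by have := k.2; omega
        show (if h : a < n then (⟨a, h⟩ : Fin n) else k) ∈ _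
        rw [dif_pos han]
        simp only [Finset.mem_coe, Finset.mem_filter, Finset.mem_univ, true_and]
        omega
      · intro a ha b hb hab
        simp only [Finset.coe_range, Set.mem_Iio] at ha hb
        have han : a < n := by have := k.2; omega
        have hbn : b < n := by have := k.2; omega
        have hab' : (if h : a < n then (⟨a, h⟩ : Fin n) else k)
            = (if h : b < n then (⟨b, h⟩ : Fin n) else k) := hab
        rw [dif_pos han, dif_pos hbn] at hab'
        exact Fin.mk.inj_iff.mp hab'
    omega

end Counting

section Cone

open Complex

lemma cone_zero {ι : Type*} (s : Finset ι) (z : ι → ℂ) (m φ : ι → ℝ) (c : ℝ)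
    (hz : ∀ t ∈ s, z t = (m t : ℂ) * Complex.exp (↑(Real.pi * φ t) * Complex.I))
    (hm : ∀ t ∈ s, 0 ≤ m t) (hlo : ∀ t ∈ s, c - 1/4 < φ t) (hhi : ∀ t ∈ s, φ t < c)
    (hsum : ∑ t ∈ s, z t = 0) : ∀ t ∈ s, z t = 0 := by
  set w : ℂ := Complex.exp (↑(-(Real.pi * (c - 1/8))) * Complex.I) with hw
  have hre : ∀ t ∈ s, (w * z t).re = m t * Real.cos (Real.pi * (φ t - (c - 1/8))) := by
    intro t ht
    rw [hz t ht, hw, mul_comm w, mul_assoc, ← Complex.exp_add]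
    have harg : (↑(Real.pi * φ t) * Complex.I + ↑(-(Real.pi * (c - 1/8))) * Complex.I)
        = ↑(Real.pi * (φ t - (c - 1/8))) * Complex.I := by
      push_cast
      ring
    rw [harg, Complex.re_ofReal_mul, Complex.exp_ofReal_mul_I_re]
  have hpos : ∀ t ∈ s, 0 < Real.cos (Real.pi * (φ t - (c - 1/8))) := by
    intro t ht
    apply Real.cos_pos_of_mem_Ioo
    have h1 := hlo t ht
    have h2 := hhi t ht
    have hπ := Real.pi_pos
    constructor
    · nlinarith
    · nlinarith
  have hsum0 : ∑ t ∈ s, (w * z t).re = 0 := by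
    rw [← Complex.re_sum, ← Finset.mul_sum, hsum, mul_zero, Complex.zero_re]
  have hterm : ∀ t ∈ s, (w * z t).re = 0 := by
    intro t ht
    refine (Finset.sum_eq_zero_iff_of_nonneg ?_).mp hsum0 t ht
    intro u hu
    rw [hre u hu]
    exact mul_nonneg (hm u hu) (le_of_lt (hpos u hu))
  intro t ht
  have hm0 : m t = 0 := by
    have h0 := hterm t ht
    rw [hre t ht] at h0
    rcases mul_eq_zero.mp h0 with h | h
    · exact h
    · exact absurd h (ne_of_gt (hpos t ht))
  rw [hz t ht, hm0]
  simp

end Cone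

section CutIso

variable (S : Slicing C Set.univ)

/-- The key comparison: cutting two filtrations (of the outer objects of a triangle)
at a level `c'` above all phases of the third object produces isomorphic
filtration levels. -/
lemma cut_iso (T : Triangle C) (hT : T ∈ distTriang C)
    (F : HNFiltration C S.P T.obj₂) (G : HNFiltration C S.P T.obj₁)
    (Hb : HNFiltration C S.P T.obj₃)
    (c c' : ℝ) (hcc : c ≤ c') (hbhi : ∀ j : Fin Hb.n, Hb.phase j < c)
    (sF : ℕ) (hsF : sF ≤ F.n) (hFs : ∀ k : Fin F.n, ((k : ℕ) < sF ↔ c' ≤ F.phase k))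
    (rG : ℕ) (hrG : rG ≤ G.n) (hGs : ∀ j : Fin G.n, ((j : ℕ) < rG ↔ c' ≤ G.phase j)) :
    Nonempty (G.objN rG hrG ≅ F.objN sF hsF) := by
  have hsR : ∀ ⦃t : C⦄ ⦃ρ : ℝ⦄, t ∈ S.P ρ → ρ < c' → ∀ f : G.objN rG hrG ⟶ t, f = 0 := by
    intro t ρ ht hρ f
    exact objN_hom_vanish S G rG hrG ht (fun i hi => lt_of_lt_of_le hρ ((hGs i).1 hi)) f
  have hsP : ∀ ⦃t : C⦄ ⦃ρ : ℝ⦄, t ∈ S.P ρ → ρ < c' → ∀ f : F.objN sF hsF ⟶ t, f = 0 := by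
    intro t ρ ht hρ f
    exact objN_hom_vanish S F sF hsF ht (fun i hi => lt_of_lt_of_le hρ ((hFs i).1 hi)) f
  have hFlow : ∀ i : Fin F.n, sF ≤ (i : ℕ) → F.phase i < c' := by
    intro i hi
    by_contra h
    push_neg at h
    have := (hFs i).2 h
    omega
  have hGlow : ∀ j : Fin G.n, rG ≤ (j : ℕ) → G.phase j < c' := by
    intro j hj
    by_contra h
    push_neg at h
    have := (hGs j).2 h
    omega
  set uG : G.objN rG hrG ⟶ T.obj₂ := G.towTop rG hrG ≫ T.mor₁ with huG
  obtain ⟨α, hα⟩ := factor_towTop S F hsR sF hsF hFlow uG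
  have hPb : ∀ f : F.objN sF hsF ⟶ T.obj₃, f = 0 := by
    intro f
    exact hom_into_X_vanish S Hb
      (fun t ρ ht hρ g => hsP ht (lt_of_lt_of_le hρ hcc) g)
      (fun j => hbhi j) f
  have hf2 : F.towTop sF hsF ≫ T.mor₂ = 0 := hPb _
  obtain ⟨γ, hγ⟩ := Triangle.coyoneda_exact₂ _ hT _ hf2
  obtain ⟨β, hβ⟩ := factor_towTop S G hsP rG hrG hGlow γ
  have hβu : β ≫ uG = F.towTop sF hsF := by
    rw [huG, ← Category.assoc, hβ, ← hγ]
  have hβα : β ≫ α = 𝟙 _ := by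
    have he : (β ≫ α - 𝟙 _) ≫ F.towTop sF hsF = 0 := by
      rw [Preadditive.sub_comp, Category.assoc, hα, hβu, Category.id_comp, sub_self]
    have h0 := cancel_towTop S F hsP sF hsF hFlow _ he
    rwa [sub_eq_zero] at h0
  have hRb : ∀ g : G.objN rG hrG ⟶ T.obj₃⟦(-1 : ℤ)⟧, g = 0 := by
    intro g
    exact hom_X_shift_vanish S Hb
      (fun t ρ ht hρ f => hsR ht (lt_of_lt_of_le hρ hcc) f) hbhi g
  have hαβ : α ≫ β = 𝟙 _ := by
    have he0 : (α ≫ β - 𝟙 _) ≫ uG = 0 := by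
      rw [Preadditive.sub_comp, Category.assoc, hβu, hα, Category.id_comp, sub_self]
    rw [huG, ← Category.assoc] at he0
    have he2 : (α ≫ β - 𝟙 _) ≫ G.towTop rG hrG = 0 :=
      zero_of_comp_mor₁ hT hRb _ he0
    have h0 := cancel_towTop S G hsR rG hrG hGlow _ he2
    rwa [sub_eq_zero] at h0
  exact ⟨⟨α, β, hαβ, hβα⟩⟩

end CutIso

section MainInduction

variable {vd : ChargeData C E}

lemma mass_zero_of_window (σ : LaxPreStab C E Set.univ vd) {b : C} (hbnz : ¬IsZero b)
    (ψ : ℝ)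
    (hwin : ∀ j : Fin ((σ.slicing.hn b trivial hbnz).some).n,
      ψ - 1/8 < ((σ.slicing.hn b trivial hbnz).some).phase j ∧
      ((σ.slicing.hn b trivial hbnz).some).phase j < ψ + 1/8)
    (hZb : σ.Z (vd.v b) = 0) : σ.mass b = 0 := by
  set Hb := (σ.slicing.hn b trivial hbnz).some with hHb
  choose mH hmH hzH using fun j : Fin Hb.n => σ.compat _ _ (Hb.factor_mem j)
  have hsum : ∑ j : Fin Hb.n, σ.Z (vd.v (Hb.factor j)) = 0 := by
    rw [← map_sum, ← v_eq_sum vd Hb, hZb]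
  have hcone := cone_zero Finset.univ (fun j : Fin Hb.n => σ.Z (vd.v (Hb.factor j)))
    mH Hb.phase (ψ + 1/8) (fun t _ => hzH t) (fun t _ => hmH t)
    (fun t _ => by have := (hwin t).1; linarith)
    (fun t _ => by have := (hwin t).2; linarith) hsum
  rw [mass_eq_sum σ hbnz, ← hHb]
  refine Finset.sum_eq_zero fun j _ => ?_
  have h0 : σ.Z (vd.v (Hb.factor j)) = 0 := hcone j (Finset.mem_univ j)
  rw [h0]
  simp

lemma factors_massless (σ : LaxPreStab C E Set.univ vd) (QS : Slicing C Set.univ)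
    (hdist : slicingDist σ.slicing QS < ENNReal.ofReal (1 / 8)) :
    ∀ (n : ℕ) (X : C) (Fl : HNFiltration C QS.P X), Fl.n = n → ¬IsZero X →
      σ.mass X = 0 → ∀ i : Fin Fl.n, σ.mass (Fl.factor i) = 0 := by
  intro n
  induction n using Nat.strong_induction_on with
  | _ n IH =>
  intro X Fl hn hX hm i
  subst hn
  have h1 : 1 ≤ Fl.n := pos_n QS Fl hX
  set lastI : Fin Fl.n := ⟨Fl.n - 1, by omega⟩ with hlastI
  have hsuccX : Fl.obj lastI.succ = X := obj_succ_eq_X QS Fl h1 lastI rfl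
  set ψ : ℝ := Fl.phase lastI with hψ
  set b : C := Fl.factor lastI with hbdef
  have hbnz : ¬IsZero b := Fl.factor_nonzero lastI
  have hbP : b ∈ QS.P ψ := Fl.factor_mem lastI
  set T : Triangle C := Triangle.mk (Fl.map lastI ≫ eqToHom hsuccX)
      (eqToHom hsuccX.symm ≫ Fl.toFactor lastI) (Fl.toShift lastI) with hTdef
  have hvlast : (lastI : ℕ) = Fl.n - 1 := rfl
  have hTd : T ∈ distTriang C := by
    rw [hTdef]
    refine isomorphic_distinguished _ (Fl.distinguished lastI) _ ?_
    exact Triangle.isoMk _ _ (Iso.refl _) (eqToIso hsuccX.symm) (Iso.refl _)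
      (by simp [Triangle.mk]) (by simp [Triangle.mk]) (by simp [Triangle.mk])
  set Fσ : HNFiltration C σ.slicing.P X := (σ.slicing.hn X trivial hX).some with hFσ
  have hfac0 : ∀ k, σ.Z (vd.v (Fσ.factor k)) = 0 := (mass_zero_iff σ hX).1 hm
  have hZX : σ.Z (vd.v X) = 0 := by
    rw [v_eq_sum vd Fσ, map_sum]
    exact Finset.sum_eq_zero fun k _ => hfac0 k
  have hZpart : ∀ (k : ℕ) (hk : k ≤ Fσ.n), σ.Z (vd.v (Fσ.objN k hk)) = 0 := by
    intro k
    induction k with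
    | zero =>
      intro hk
      rw [v_isZero vd (Fσ.isZero_objN_zero hk)]
      simp
    | succ k IHk =>
      intro hk
      rw [v_objN_succ vd Fσ k hk, map_add, IHk (le_of_lt hk), hfac0 ⟨k, hk⟩, add_zero]
  set Hb : HNFiltration C σ.slicing.P b := (σ.slicing.hn b trivial hbnz).some with hHbdef
  have hbwin : ∀ j : Fin Hb.n, ψ - 1/8 < Hb.phase j ∧ Hb.phase j < ψ + 1/8 := by
    intro j
    have hw := window_bounds σ.slicing QS hdist hbnz Hb (singleFilt ψ hbP hbnz) j
    have e1 : (singleFilt ψ hbP hbnz).phase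
        ⟨(singleFilt ψ hbP hbnz).n - 1, Nat.zero_lt_one⟩ = ψ := rfl
    have e2 : (singleFilt ψ hbP hbnz).phase ⟨0, Nat.one_pos⟩ = ψ := rfl
    constructor
    · have hw1 := hw.1
      rw [e1] at hw1
      linarith
    · have hw2 := hw.2
      rw [e2] at hw2
      linarith
  by_cases hAz : IsZero T.obj₁
  · -- the subobject is zero: `X ≅ b`, a single factor
    have hvb : σ.Z (vd.v b) = 0 := by
      have hadd : vd.v X = vd.v T.obj₁ + vd.v b := vd.additive _ hTd
      rw [v_isZero vd hAz, zero_add] at hadd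
      rw [← hadd]
      exact hZX
    have hi : i = lastI := by
      have hn1 : Fl.n = 1 := by
        by_contra hne
        have h2 : 1 ≤ Fl.n - 1 := by omega
        exact nonzero_of_filt QS (truncFilt Fl (Fl.n - 1) (by omega)) h2 hAz
      refine Fin.ext ?_
      have hi2 := i.2
      rw [hvlast]
      omega
    rw [hi]
    exact mass_zero_of_window σ hbnz ψ hbwin hvb
  · -- main case
    have hAnz : ¬IsZero T.obj₁ := hAz
    have h2 : 2 ≤ Fl.n := by
      by_contra hle
      apply hAnz
      have heq : (⟨Fl.n - 1, by omega⟩ : Fin (Fl.n + 1)) = ⟨0, by omega⟩ := by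
        ext
        show Fl.n - 1 = 0
        omega
      show IsZero (Fl.obj ⟨Fl.n - 1, by omega⟩)
      rw [heq]
      have h00 : ((⟨0, by omega⟩ : Fin (Fl.n + 1))) = 0 := by ext; simp
      rw [h00]
      exact Fl.isZero_zero
    set FQA : HNFiltration C QS.P T.obj₁ := truncFilt Fl (Fl.n - 1) (by omega) with hFQA
    set G : HNFiltration C σ.slicing.P T.obj₁ :=
      (σ.slicing.hn T.obj₁ trivial hAnz).some with hGdef
    have hGwin : ∀ j : Fin G.n, ψ - 1/8 < G.phase j := by
      intro j
      have hw := (window_bounds σ.slicing QS hdist hAnz G FQA j).1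
      have htr : FQA.phase ⟨FQA.n - 1, show FQA.n - 1 < FQA.n from
            show Fl.n - 1 - 1 < Fl.n - 1 by omega⟩ =
          Fl.phase ⟨Fl.n - 1 - 1, by omega⟩ := rfl
      rw [htr] at hw
      have hgt : ψ < Fl.phase ⟨Fl.n - 1 - 1, by omega⟩ :=
        Fl.phase_anti ⟨Fl.n - 1 - 1, by omega⟩ lastI (Fin.lt_def.mpr
          (show Fl.n - 1 - 1 < (lastI : ℕ) by rw [hvlast]; omega))
      linarith
    set c : ℝ := ψ + 1/8 with hc
    set r : ℕ := (Finset.univ.filter fun j : Fin G.n => c ≤ G.phase j).card with hr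
    have hrle : r ≤ G.n := by
      rw [hr]
      exact le_trans (Finset.card_filter_le _ _) (by simp)
    have hGs_c : ∀ j : Fin G.n, ((j : ℕ) < r ↔ c ≤ G.phase j) :=
      fun j => count_prefix G.phase G.phase_anti c j
    have hsweep : ∀ (k : ℕ) (hk : k ≤ r),
        σ.Z (vd.v (G.objN k (le_trans hk hrle))) = 0 := by
      intro k hk
      rcases Nat.eq_zero_or_pos k with h0 | hpos
      · subst h0
        rw [v_isZero vd (G.isZero_objN_zero _)]
        simp
      · set c' : ℝ := G.phase ⟨k - 1, by omega⟩ with hc'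
        have hcc : c ≤ c' := (hGs_c ⟨k - 1, by omega⟩).1 (show k - 1 < r by omega)
        set sF : ℕ := (Finset.univ.filter fun i : Fin Fσ.n => c' ≤ Fσ.phase i).card
          with hsFdef
        have hsFle : sF ≤ Fσ.n := by
          rw [hsFdef]
          exact le_trans (Finset.card_filter_le _ _) (by simp)
        have hFs : ∀ i : Fin Fσ.n, ((i : ℕ) < sF ↔ c' ≤ Fσ.phase i) :=
          fun i => count_prefix Fσ.phase Fσ.phase_anti c' i
        have hGs' : ∀ j : Fin G.n, ((j : ℕ) < k ↔ c' ≤ G.phase j) := by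
          intro j
          constructor
          · intro hj
            rcases eq_or_lt_of_le (Nat.le_sub_one_of_lt hj) with h | h
            · have hje : j = ⟨k - 1, by omega⟩ := Fin.ext h
              rw [hje]
            · exact le_of_lt (G.phase_anti j ⟨k - 1, by omega⟩ (Fin.lt_def.mpr h))
          · intro hj
            by_contra hjk
            push_neg at hjk
            have hlt : G.phase j < c' :=
              G.phase_anti ⟨k - 1, by omega⟩ j (Fin.lt_def.mpr
                (show k - 1 < (j : ℕ) by omega))
            linarith
        obtain ⟨e⟩ := cut_iso σ.slicing T hTd Fσ G Hb c c' hcc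
          (fun j => (hbwin j).2) sF hsFle hFs k (le_trans hk hrle) hGs'
        rw [v_iso vd e]
        exact hZpart sF hsFle
    have hGfac_hi : ∀ j : Fin G.n, (j : ℕ) < r → σ.Z (vd.v (G.factor j)) = 0 := by
      intro j hj
      have hjn : (j : ℕ) < G.n := j.2
      have h1 : σ.Z (vd.v (G.objN ((j : ℕ) + 1) hjn)) = 0 := hsweep ((j : ℕ) + 1) (by omega)
      have h2 : σ.Z (vd.v (G.objN (j : ℕ) hjn.le)) = 0 := hsweep (j : ℕ) (by omega)
      rw [v_objN_succ vd G (j : ℕ) hjn, map_add, h2, zero_add] at h1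
      have hje : (⟨(j : ℕ), hjn⟩ : Fin G.n) = j := Fin.ext rfl
      rw [hje] at h1
      exact h1
    have hZA : σ.Z (vd.v T.obj₁) =
        ∑ j ∈ Finset.univ.filter (fun j : Fin G.n => r ≤ (j : ℕ)),
          σ.Z (vd.v (G.factor j)) := by
      have hd := v_diff vd G r hrle
      rw [G.objN_last] at hd
      rw [hd, map_add, hsweep r le_rfl, zero_add, map_sum]
    have hsum0 : (∑ j ∈ Finset.univ.filter (fun j : Fin G.n => r ≤ (j : ℕ)),
        σ.Z (vd.v (G.factor j))) + ∑ j : Fin Hb.n, σ.Z (vd.v (Hb.factor j)) = 0 := by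
      have hZb : σ.Z (vd.v b) = ∑ j : Fin Hb.n, σ.Z (vd.v (Hb.factor j)) := by
        rw [← map_sum, ← v_eq_sum vd Hb]
      have hvXadd : vd.v X = vd.v T.obj₁ + vd.v b := vd.additive _ hTd
      have h3 := congrArg σ.Z hvXadd
      rw [map_add, hZX] at h3
      rw [← hZA, ← hZb]
      exact h3.symm
    choose mG hmG hzG using fun j : Fin G.n => σ.compat _ _ (G.factor_mem j)
    choose mH hmH hzH using fun j : Fin Hb.n => σ.compat _ _ (Hb.factor_mem j)
    have hcone := cone_zero
      ((Finset.univ.filter (fun j : Fin G.n => r ≤ (j : ℕ))).disjSum Finset.univ)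
      (Sum.elim (fun j => σ.Z (vd.v (G.factor j))) (fun j => σ.Z (vd.v (Hb.factor j))))
      (Sum.elim mG mH) (Sum.elim G.phase Hb.phase) c
      (by rintro (j | j) ht
          · exact hzG j
          · exact hzH j)
      (by rintro (j | j) ht
          · exact hmG j
          · exact hmH j)
      (by rintro (j | j) ht
          · have := hGwin j
            simp only [Sum.elim_inl]
            rw [hc]
            linarith
          · have := (hbwin j).1
            simp only [Sum.elim_inr]
            rw [hc]
            linarith)
      (by rintro (j | j) ht
          · simp only [Finset.inl_mem_disjSum, Finset.mem_filter, Finset.mem_univ,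
              true_and] at ht
            have hnc : ¬ (c ≤ G.phase j) := fun hcon => by
              have := (hGs_c j).2 hcon
              omega
            simp only [Sum.elim_inl]
            exact lt_of_not_ge hnc
          · simp only [Sum.elim_inr]
            exact (hbwin j).2)
      (by rw [Finset.sum_sumElim]; exact hsum0)
    have hmassb : σ.mass b = 0 := by
      rw [mass_eq_sum σ hbnz, ← hHbdef]
      refine Finset.sum_eq_zero fun j _ => ?_
      have hz0 := hcone (Sum.inr j) (by simp)
      simp only [Sum.elim_inr] at hz0
      rw [hz0]
      simp
    rcases eq_or_lt_of_le (Nat.le_sub_one_of_lt i.2) with hi | hi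
    · have hie : i = lastI := Fin.ext (by rw [hvlast]; exact hi)
      rw [hie]
      exact hmassb
    · have hGfac : ∀ j : Fin G.n, σ.Z (vd.v (G.factor j)) = 0 := by
        intro j
        by_cases hj : (j : ℕ) < r
        · exact hGfac_hi j hj
        · have hz0 := hcone (Sum.inl j) (by
            simp only [Finset.inl_mem_disjSum, Finset.mem_filter, Finset.mem_univ,
              true_and]
            omega)
          simpa using hz0
      have hAm : σ.mass T.obj₁ = 0 := by
        rw [mass_zero_iff σ hAnz]
        intro k
        exact hGfac k
      have hrec := IH (Fl.n - 1) (by omega) T.obj₁ FQA rfl hAnz hAm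
        ⟨(i : ℕ), show (i : ℕ) < FQA.n by
          show (i : ℕ) < Fl.n - 1
          omega⟩
      have hfaceq : FQA.factor ⟨(i : ℕ), show (i : ℕ) < FQA.n by
          show (i : ℕ) < Fl.n - 1
          omega⟩ = Fl.factor i := by
        exact congrArg Fl.factor (Fin.ext rfl)
      rw [← hfaceq]
      exact hrec

end MainInduction


/-- slicings close to a lax pre-stability condition restrict to its massless
subcategory; in particular this holds for lax pre-stability conditions in `B_ε(σ)`. -/
theorem statement_7 (vd : ChargeData C E) (σ : LaxPreStab C E Set.univ vd) :
    (∀ QS : Slicing C Set.univ, slicingDist σ.slicing QS < ENNReal.ofReal (1 / 8) →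
      ∀ X ∈ σ.massless, ¬ IsZero X →
        ∀ (Fl : HNFiltration C QS.P X) (i : Fin Fl.n), Fl.factor i ∈ σ.massless) ∧
    (∀ ε : ℝ, 0 < ε → ε < 1 / 8 → ∀ τ : LaxPreStab C E Set.univ vd, memB σ τ ε →
      ∀ X ∈ σ.massless, ¬ IsZero X →
        ∀ (Fl : HNFiltration C τ.slicing.P X) (i : Fin Fl.n), Fl.factor i ∈ σ.massless) := by
  constructor
  · intro QS hdist X hXmem hXnz Fl i
    exact ⟨trivial, factors_massless σ QS hdist Fl.n X Fl rfl hXnz hXmem.2 i⟩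
  · intro ε hε hε8 τ hmem X hXmem hXnz Fl i
    have hd : slicingDist σ.slicing τ.slicing < ENNReal.ofReal (1 / 8) :=
      lt_of_lt_of_le hmem.1 (ENNReal.ofReal_le_ofReal (le_of_lt hε8))
    exact ⟨trivial, factors_massless σ τ.slicing hd Fl.n X Fl rfl hXnz hXmem.2 i⟩

end PaperStab
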